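/- Let β ∈ (0,1], let D be a 2×2 matrix with positive entries, let N : ℝ² → ℝ² be a map with components Nᵢ(x) = (1/2)Σ_{j,k} b^i_{jk} x_j x_k for nonnegative coefficients b^i_{jk}, and let Γ_β > 0 be a constant. Then there exists Λ > 0 such that the equation Θ(λ) = D(0,1)^† − Γ_β λ^β ∫₀¹ D N(Θ(λ(1−y))) d(y^β) has a unique solution Θ in the class of continuous functions from [0, Λ] to [0,∞)², and this solution satisfies 0 ≤ Θ(λ) ≤ D(0,1)^† for all λ ∈ [0, Λ]. -/

import Mathlib

open Filter Set intervalIntegral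

/-- The quadratic map `N` with components `Nᵢ(x) = (1/2)Σ_{j,k} b^i_{jk} x_j x_k`. -/
noncomputable def quadMap (b : Fin 2 → Fin 2 → Fin 2 → ℝ) (x : Fin 2 → ℝ) : Fin 2 → ℝ :=
  fun i => (1 / 2) * ∑ j, ∑ k, b i j k * x j * x k

section Aux

variable {β Γβ Λ : ℝ} {D : Matrix (Fin 2) (Fin 2) ℝ} {b : Fin 2 → Fin 2 → Fin 2 → ℝ}

lemma mulVec_apply (D : Matrix (Fin 2) (Fin 2) ℝ) (v : Fin 2 → ℝ) (i : Fin 2) :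
    D.mulVec v i = ∑ j, D i j * v j := rfl

lemma quadMap_nonneg (hb : ∀ i j k, 0 ≤ b i j k) {x : Fin 2 → ℝ} (hx : ∀ j, 0 ≤ x j)
    (i : Fin 2) : 0 ≤ quadMap b x i :=
  mul_nonneg (by norm_num) (Finset.sum_nonneg fun j _ => Finset.sum_nonneg fun k _ =>
    mul_nonneg (mul_nonneg (hb i j k) (hx j)) (hx k))

lemma quadMap_mono (hb : ∀ i j k, 0 ≤ b i j k) {x z : Fin 2 → ℝ} (hx : ∀ j, 0 ≤ x j)
    (hxz : ∀ j, x j ≤ z j) (i : Fin 2) : quadMap b x i ≤ quadMap b z i := by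
  unfold quadMap
  refine mul_le_mul_of_nonneg_left ?_ (by norm_num)
  refine Finset.sum_le_sum fun j _ => Finset.sum_le_sum fun k _ => ?_
  exact mul_le_mul (mul_le_mul_of_nonneg_left (hxz j) (hb i j k)) (hxz k) (hx k)
    (mul_nonneg (hb i j k) ((hx j).trans (hxz j)))

lemma nl_nonneg (hD : ∀ i j, 0 ≤ D i j) (hb : ∀ i j k, 0 ≤ b i j k) {x : Fin 2 → ℝ}
    (hx : ∀ j, 0 ≤ x j) (i : Fin 2) : 0 ≤ D.mulVec (quadMap b x) i := by
  rw [mulVec_apply]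
  exact Finset.sum_nonneg fun j _ => mul_nonneg (hD i j) (quadMap_nonneg hb hx j)

lemma nl_mono (hD : ∀ i j, 0 ≤ D i j) (hb : ∀ i j k, 0 ≤ b i j k) {x z : Fin 2 → ℝ}
    (hx : ∀ j, 0 ≤ x j) (hxz : ∀ j, x j ≤ z j) (i : Fin 2) :
    D.mulVec (quadMap b x) i ≤ D.mulVec (quadMap b z) i := by
  rw [mulVec_apply, mulVec_apply]
  exact Finset.sum_le_sum fun j _ =>
    mul_le_mul_of_nonneg_left (quadMap_mono hb hx hxz j) (hD i j)

lemma quadMap_lip (hb : ∀ i j k, 0 ≤ b i j k) {x x' : Fin 2 → ℝ} {m d : ℝ}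
    (hx : ∀ j, |x j| ≤ m) (hx' : ∀ j, |x' j| ≤ m) (hd : ∀ j, |x j - x' j| ≤ d) (i : Fin 2) :
    |quadMap b x i - quadMap b x' i| ≤ (∑ j, ∑ k, b i j k) * (m * d) := by
  have hm : 0 ≤ m := (abs_nonneg _).trans (hx 0)
  have hd0 : 0 ≤ d := (abs_nonneg _).trans (hd 0)
  have key : ∀ j k, |b i j k * x j * x k - b i j k * x' j * x' k| ≤ b i j k * (2 * (m * d)) := by
    intro j k
    have e : b i j k * x j * x k - b i j k * x' j * x' k
        = b i j k * (x j * (x k - x' k) + (x j - x' j) * x' k) := by ring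
    rw [e, abs_mul, abs_of_nonneg (hb i j k)]
    refine mul_le_mul_of_nonneg_left ?_ (hb i j k)
    calc |x j * (x k - x' k) + (x j - x' j) * x' k|
        ≤ |x j| * |x k - x' k| + |x j - x' j| * |x' k| := by
          refine (abs_add_le _ _).trans ?_; rw [abs_mul, abs_mul]
      _ ≤ m * d + d * m := add_le_add (mul_le_mul (hx j) (hd k) (abs_nonneg _) hm)
          (mul_le_mul (hd j) (hx' k) (abs_nonneg _) hd0)
      _ = 2 * (m * d) := by ring
  have e2 : quadMap b x i - quadMap b x' i
      = (1/2) * ∑ j, ∑ k, (b i j k * x j * x k - b i j k * x' j * x' k) := by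
    unfold quadMap
    rw [← mul_sub, ← Finset.sum_sub_distrib]
    congr 1
    exact Finset.sum_congr rfl fun j _ => (Finset.sum_sub_distrib _ _).symm
  rw [e2, abs_mul, abs_of_nonneg (by norm_num : (0:ℝ) ≤ 1/2)]
  calc (1/2) * |∑ j, ∑ k, (b i j k * x j * x k - b i j k * x' j * x' k)|
      ≤ (1/2) * ∑ j, ∑ k, |b i j k * x j * x k - b i j k * x' j * x' k| := by
        refine mul_le_mul_of_nonneg_left ?_ (by norm_num)
        exact (Finset.abs_sum_le_sum_abs _ _).trans
          (Finset.sum_le_sum fun j _ => Finset.abs_sum_le_sum_abs _ _)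
    _ ≤ (1/2) * ∑ j, ∑ k, b i j k * (2 * (m * d)) := by
        refine mul_le_mul_of_nonneg_left
          (Finset.sum_le_sum fun j _ => Finset.sum_le_sum fun k _ => key j k) (by norm_num)
    _ = (∑ j, ∑ k, b i j k) * (m * d) := by
        simp_rw [← Finset.sum_mul]; ring

lemma nl_lip (hD : ∀ i j, 0 ≤ D i j) (hb : ∀ i j k, 0 ≤ b i j k) {x x' : Fin 2 → ℝ} {m d : ℝ}
    (hx : ∀ j, |x j| ≤ m) (hx' : ∀ j, |x' j| ≤ m) (hd : ∀ j, |x j - x' j| ≤ d) (i : Fin 2) :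
    |D.mulVec (quadMap b x) i - D.mulVec (quadMap b x') i|
      ≤ (∑ j, D i j * (∑ k, ∑ m', b j k m')) * (m * d) := by
  have e : D.mulVec (quadMap b x) i - D.mulVec (quadMap b x') i
      = ∑ j, D i j * (quadMap b x j - quadMap b x' j) := by
    rw [mulVec_apply, mulVec_apply, ← Finset.sum_sub_distrib]
    exact Finset.sum_congr rfl fun j _ => (mul_sub _ _ _).symm
  rw [e]
  refine (Finset.abs_sum_le_sum_abs _ _).trans ?_
  rw [Finset.sum_mul]
  refine Finset.sum_le_sum fun j _ => ?_
  rw [abs_mul, abs_of_nonneg (hD i j), mul_assoc]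
  exact mul_le_mul_of_nonneg_left (quadMap_lip hb hx hx' hd j) (hD i j)

lemma nl_cont (D : Matrix (Fin 2) (Fin 2) ℝ) (b : Fin 2 → Fin 2 → Fin 2 → ℝ) (i : Fin 2) :
    Continuous fun x : Fin 2 → ℝ => D.mulVec (quadMap b x) i := by
  simp only [mulVec_apply]
  refine continuous_finset_sum _ fun j _ => continuous_const.mul ?_
  unfold quadMap
  refine continuous_const.mul (continuous_finset_sum _ fun k _ =>
    continuous_finset_sum _ fun m _ => ?_)
  exact (continuous_const.mul (continuous_apply k)).mul (continuous_apply m)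

/-- The Picard iteration map. -/
noncomputable def picardMap (β Γβ Λ : ℝ) (hΛ : (0:ℝ) ≤ Λ) (D : Matrix (Fin 2) (Fin 2) ℝ)
    (b : Fin 2 → Fin 2 → Fin 2 → ℝ) (f : C(Set.Icc (0:ℝ) Λ, Fin 2 → ℝ)) (t : ℝ) (i : Fin 2) :
    ℝ :=
  D.mulVec ![0, 1] i - Γβ * t ^ β * ∫ y in (0:ℝ)..1,
    β * y ^ (β - 1) * (D.mulVec (quadMap b (f (Set.projIcc 0 Λ hΛ (t * (1 - y))))) i)

lemma pm_integrand_integrable (hβ0 : 0 < β) (hΛ : (0:ℝ) ≤ Λ)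
    (f : C(Set.Icc (0:ℝ) Λ, Fin 2 → ℝ)) (t : ℝ) (i : Fin 2) :
    IntervalIntegrable
      (fun y => β * y ^ (β - 1) * (D.mulVec (quadMap b (f (Set.projIcc 0 Λ hΛ (t * (1 - y))))) i))
      MeasureTheory.volume 0 1 := by
  have h1 : IntervalIntegrable (fun y : ℝ => β * y ^ (β - 1)) MeasureTheory.volume 0 1 :=
    (intervalIntegral.intervalIntegrable_rpow' (by linarith)).const_mul β
  refine h1.mul_continuousOn (Continuous.continuousOn ?_)
  exact (nl_cont D b i).comp (f.continuous.comp (continuous_projIcc.comp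
    (continuous_const.mul (continuous_const.sub continuous_id))))

lemma pm_cont (hβ0 : 0 < β) (hΛ : (0:ℝ) ≤ Λ)
    (f : C(Set.Icc (0:ℝ) Λ, Fin 2 → ℝ)) (i : Fin 2) {Cg : ℝ}
    (hbd : ∀ p, |D.mulVec (quadMap b (f p)) i| ≤ Cg) :
    Continuous fun t : ℝ => picardMap β Γβ Λ hΛ D b f t i := by
  unfold picardMap
  refine continuous_const.sub (Continuous.mul
    (continuous_const.mul (Real.continuous_rpow_const hβ0.le)) ?_)
  refine intervalIntegral.continuous_of_dominated_interval
    (bound := fun y => β * y ^ (β - 1) * Cg) ?_ ?_ ?_ ?_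
  · intro t
    refine Measurable.aestronglyMeasurable ?_
    have hm1 : Measurable fun y : ℝ => β * y ^ (β - 1) := by fun_prop
    have hm2 : Measurable fun y : ℝ =>
        D.mulVec (quadMap b (f (Set.projIcc 0 Λ hΛ (t * (1 - y))))) i :=
      ((nl_cont D b i).comp (f.continuous.comp (continuous_projIcc.comp
        (continuous_const.mul (continuous_const.sub continuous_id))))).measurable
    exact hm1.mul hm2
  · intro t
    filter_upwards with y hy
    rw [Set.uIoc_of_le (zero_le_one' ℝ)] at hy
    have hw : 0 ≤ β * y ^ (β - 1) := mul_nonneg hβ0.le (Real.rpow_nonneg hy.1.le _)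
    rw [Real.norm_eq_abs, abs_mul, abs_of_nonneg hw]
    exact mul_le_mul_of_nonneg_left (hbd _) hw
  · exact ((intervalIntegral.intervalIntegrable_rpow'
      (by linarith : (-1:ℝ) < β - 1)).const_mul β).mul_const Cg
  · filter_upwards with y _
    refine continuous_const.mul ?_
    exact (nl_cont D b i).comp (f.continuous.comp (continuous_projIcc.comp
      (continuous_id.mul continuous_const)))

end Aux

/-- Lemma (L_uniq): for `β ∈ (0,1]` there is `Λ > 0` such that the equation
`Θ(λ) = D(0,1)^† − Γ_β λ^β ∫₀¹ D N(Θ(λ(1−y))) d(y^β)` has a unique continuous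
nonnegative solution on `[0,Λ]`, and it satisfies `0 ≤ Θ(λ) ≤ D(0,1)^†`. -/
theorem L_uniq (β Γβ : ℝ) (hβ : β ∈ Set.Ioc (0:ℝ) 1) (hΓ : 0 < Γβ)
    (D : Matrix (Fin 2) (Fin 2) ℝ) (hD : ∀ i j, 0 < D i j)
    (b : Fin 2 → Fin 2 → Fin 2 → ℝ) (hb : ∀ i j k, 0 ≤ b i j k) :
    ∃ Λ > (0:ℝ), ∃ Θ : ℝ → Fin 2 → ℝ,
      (∀ i, ContinuousOn (fun l => Θ l i) (Set.Icc 0 Λ)) ∧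
      (∀ l ∈ Set.Icc (0:ℝ) Λ, ∀ i, 0 ≤ Θ l i ∧ Θ l i ≤ D.mulVec ![0, 1] i) ∧
      (∀ l ∈ Set.Icc (0:ℝ) Λ, ∀ i,
        Θ l i = D.mulVec ![0, 1] i -
          Γβ * l ^ β * ∫ y in (0:ℝ)..1,
            β * y ^ (β - 1) * (D.mulVec (quadMap b (Θ (l * (1 - y)))) i)) ∧
      (∀ Θ' : ℝ → Fin 2 → ℝ,
        (∀ i, ContinuousOn (fun l => Θ' l i) (Set.Icc 0 Λ)) →
        (∀ l ∈ Set.Icc (0:ℝ) Λ, ∀ i, 0 ≤ Θ' l i) →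
        (∀ l ∈ Set.Icc (0:ℝ) Λ, ∀ i,
          Θ' l i = D.mulVec ![0, 1] i -
            Γβ * l ^ β * ∫ y in (0:ℝ)..1,
              β * y ^ (β - 1) * (D.mulVec (quadMap b (Θ' (l * (1 - y)))) i)) →
        ∀ l ∈ Set.Icc (0:ℝ) Λ, ∀ i, Θ' l i = Θ l i) := by
  obtain ⟨hβ0, hβ1⟩ := hβ
  have hD0 : ∀ i j, 0 ≤ D i j := fun i j => (hD i j).le
  set c : Fin 2 → ℝ := D.mulVec ![0, 1] with hcdef
  have hc : ∀ i, 0 < c i := by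
    intro i
    have h1 := hD i 1
    simp only [hcdef, mulVec_apply, Fin.sum_univ_two, Matrix.cons_val_zero, Matrix.cons_val_one,
      Matrix.head_cons]
    nlinarith
  have hc0 : ∀ i, 0 ≤ c i := fun i => (hc i).le
  set cm : ℝ := max (c 0) (c 1) with hcmdef
  have hcm0 : 0 < cm := lt_max_of_lt_left (hc 0)
  have hcmj : ∀ j, c j ≤ cm := fun j => by
    fin_cases j
    exacts [le_max_left _ _, le_max_right _ _]
  set Kb : Fin 2 → ℝ := fun i => D.mulVec (quadMap b c) i with hKbdef
  have hKb0 : ∀ i, 0 ≤ Kb i := fun i => nl_nonneg hD0 hb hc0 i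
  set KM : ℝ := max (Kb 0) (Kb 1) with hKMdef
  have hKM0 : 0 ≤ KM := le_max_of_le_left (hKb0 0)
  have hKbKM : ∀ i, Kb i ≤ KM := fun i => by
    fin_cases i
    exacts [le_max_left _ _, le_max_right _ _]
  set Li : Fin 2 → ℝ := fun i => (∑ j, D i j * (∑ k, ∑ m', b j k m')) * cm with hLidef
  have hLi0 : ∀ i, 0 ≤ Li i := fun i =>
    mul_nonneg (Finset.sum_nonneg fun j _ => mul_nonneg (hD0 i j)
      (Finset.sum_nonneg fun k _ => Finset.sum_nonneg fun m' _ => hb j k m')) hcm0.le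
  set L : ℝ := max (Li 0) (Li 1) with hLdef
  have hL0 : 0 ≤ L := le_max_of_le_left (hLi0 0)
  have hLiL : ∀ i, Li i ≤ L := fun i => by
    fin_cases i
    exacts [le_max_left _ _, le_max_right _ _]
  set cmin : ℝ := min (c 0) (c 1) with hcmindef
  have hcmin : 0 < cmin := lt_min (hc 0) (hc 1)
  have hcminc : ∀ i, cmin ≤ c i := fun i => by
    fin_cases i
    exacts [min_le_left _ _, min_le_right _ _]
  set ε : ℝ := min (cmin / (KM + 1)) (1 / (2 * (L + 1))) with hεdef
  have hε : 0 < ε := lt_min (div_pos hcmin (by linarith)) (by positivity)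
  have hεle1 : ε ≤ 1 / (2 * (L + 1)) := min_le_right _ _
  have hεle2 : ε ≤ cmin / (KM + 1) := min_le_left _ _
  -- choice of Λ
  set Λ : ℝ := (ε / Γβ) ^ (1/β) with hΛdef
  have hΛ : 0 < Λ := Real.rpow_pos_of_pos (div_pos hε hΓ) _
  have hΛle : (0:ℝ) ≤ Λ := hΛ.le
  have hΛβ : Γβ * Λ ^ β = ε := by
    have h1 : Λ ^ β = ε / Γβ := by
      rw [hΛdef, ← Real.rpow_mul (div_pos hε hΓ).le, one_div, inv_mul_cancel₀ hβ0.ne',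
        Real.rpow_one]
    rw [h1, mul_comm, div_mul_cancel₀ _ hΓ.ne']
  -- weight integral facts
  have hw_int : IntervalIntegrable (fun y : ℝ => β * y ^ (β - 1)) MeasureTheory.volume 0 1 :=
    (intervalIntegral.intervalIntegrable_rpow' (by linarith)).const_mul β
  have hw_val : (∫ y in (0:ℝ)..1, β * y ^ (β - 1)) = 1 := by
    rw [intervalIntegral.integral_const_mul, integral_rpow (Or.inl (by linarith))]
    have hββ : β - 1 + 1 = β := by ring
    rw [hββ, Real.one_rpow, Real.zero_rpow hβ0.ne']
    field_simp
    norm_num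
  -- the space and the invariant set
  haveI : CompactSpace (Set.Icc (0:ℝ) Λ) := isCompact_iff_compactSpace.mp isCompact_Icc
  set S : Set C(Set.Icc (0:ℝ) Λ, Fin 2 → ℝ) := {g | ∀ t i, g t i ∈ Set.Icc 0 (c i)} with hSdef
  have hSc : IsClosed S := by
    have hrw : S = ⋂ (t : Set.Icc (0:ℝ) Λ), ⋂ (i : Fin 2),
        (fun g : C(Set.Icc (0:ℝ) Λ, Fin 2 → ℝ) => g t i) ⁻¹' (Set.Icc 0 (c i)) := by
      ext g; simp [hSdef, Set.mem_iInter, Set.mem_preimage]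
    rw [hrw]
    exact isClosed_iInter fun t => isClosed_iInter fun i =>
      isClosed_Icc.preimage ((continuous_apply i).comp (continuous_eval_const t))
  have hint : ∀ (f : C(Set.Icc (0:ℝ) Λ, Fin 2 → ℝ)) (t : ℝ) (i : Fin 2),
      IntervalIntegrable (fun y => β * y ^ (β - 1) *
        (D.mulVec (quadMap b (f (Set.projIcc 0 Λ hΛle (t * (1 - y))))) i))
        MeasureTheory.volume 0 1 :=
    fun f t i => pm_integrand_integrable hβ0 hΛle f t i
  have habs : ∀ f ∈ S, ∀ (p : Set.Icc (0:ℝ) Λ) (i : Fin 2),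
      |D.mulVec (quadMap b (f p)) i| ≤ Kb i := by
    intro f hf p i
    rw [abs_of_nonneg (nl_nonneg hD0 hb (fun j => (hf p j).1) i)]
    exact nl_mono hD0 hb (fun j => (hf p j).1) (fun j => (hf p j).2) i
  -- bounds on the integral
  have hΦ : ∀ f ∈ S, ∀ (t : ℝ) (i : Fin 2),
      0 ≤ (∫ y in (0:ℝ)..1, β * y ^ (β - 1) *
        (D.mulVec (quadMap b (f (Set.projIcc 0 Λ hΛle (t * (1 - y))))) i)) ∧
      (∫ y in (0:ℝ)..1, β * y ^ (β - 1) *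
        (D.mulVec (quadMap b (f (Set.projIcc 0 Λ hΛle (t * (1 - y))))) i)) ≤ Kb i := by
    intro f hf t i
    constructor
    · refine intervalIntegral.integral_nonneg zero_le_one fun y hy => ?_
      exact mul_nonneg (mul_nonneg hβ0.le (Real.rpow_nonneg hy.1 _))
        (nl_nonneg hD0 hb (fun j => (hf _ j).1) i)
    · have hmono := intervalIntegral.integral_mono_on zero_le_one (hint f t i)
        (hw_int.mul_const (Kb i)) (fun y hy => ?_)
      · refine hmono.trans ?_
        rw [intervalIntegral.integral_mul_const, hw_val, one_mul]
      · have hw : 0 ≤ β * y ^ (β - 1) := mul_nonneg hβ0.le (Real.rpow_nonneg hy.1 _)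
        exact mul_le_mul_of_nonneg_left (le_of_abs_le (habs f hf _ i)) hw
  have hu : ∀ t : Set.Icc (0:ℝ) Λ, 0 ≤ Γβ * (t:ℝ) ^ β ∧ Γβ * (t:ℝ) ^ β ≤ ε := by
    intro t
    refine ⟨mul_nonneg hΓ.le (Real.rpow_nonneg t.2.1 _), ?_⟩
    rw [← hΛβ]
    exact mul_le_mul_of_nonneg_left (Real.rpow_le_rpow t.2.1 t.2.2 hβ0.le) hΓ.le
  have hεKM : ε * KM ≤ cmin := by
    calc ε * KM ≤ (cmin/(KM+1)) * KM := mul_le_mul_of_nonneg_right hεle2 hKM0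
      _ ≤ cmin := by
          rw [div_mul_eq_mul_div, div_le_iff₀ (by linarith)]
          nlinarith [hcmin.le, hKM0]
  -- the Picard map preserves S and is continuous
  have hTcont : ∀ f ∈ S, Continuous fun t : Set.Icc (0:ℝ) Λ =>
      fun i => picardMap β Γβ Λ hΛle D b f ↑t i := by
    intro f hf
    refine continuous_pi fun i => ?_
    exact (pm_cont hβ0 hΛle f i (fun p => habs f hf p i)).comp continuous_subtype_val
  have hTmem : ∀ f ∈ S, ∀ (t : Set.Icc (0:ℝ) Λ) (i : Fin 2),
      picardMap β Γβ Λ hΛle D b f ↑t i ∈ Set.Icc 0 (c i) := by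
    intro f hf t i
    obtain ⟨hΦ0, hΦK⟩ := hΦ f hf ↑t i
    obtain ⟨hu0, huε⟩ := hu t
    have hup : Γβ * (↑t:ℝ)^β * (∫ y in (0:ℝ)..1, β * y ^ (β - 1) *
        (D.mulVec (quadMap b (f (Set.projIcc 0 Λ hΛle (↑t * (1 - y))))) i)) ≤ ε * KM :=
      mul_le_mul huε (hΦK.trans (hKbKM i)) hΦ0 hε.le
    have hlow : 0 ≤ Γβ * (↑t:ℝ)^β * (∫ y in (0:ℝ)..1, β * y ^ (β - 1) *
        (D.mulVec (quadMap b (f (Set.projIcc 0 Λ hΛle (↑t * (1 - y))))) i)) :=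
      mul_nonneg hu0 hΦ0
    have hcc : D.mulVec ![0,1] i = c i := rfl
    rw [Set.mem_Icc]
    unfold picardMap
    rw [hcc]
    constructor
    · have := (hεKM.trans (hcminc i))
      linarith
    · linarith
  -- the Picard operator on S
  set T : ↥S → ↥S := fun f =>
    ⟨⟨fun t => fun i => picardMap β Γβ Λ hΛle D b f.1 ↑t i, hTcont f.1 f.2⟩,
      fun t i => hTmem f.1 f.2 t i⟩ with hTdef
  -- contraction constant
  set k : ℝ := ε * L with hkdef
  have hk0 : 0 ≤ k := mul_nonneg hε.le hL0
  have hk1 : k < 1 := by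
    calc k ≤ (1/(2*(L+1))) * L := mul_le_mul_of_nonneg_right hεle1 hL0
      _ < 1 := by
          rw [div_mul_eq_mul_div, div_lt_iff₀ (by linarith)]
          nlinarith
  have hTlip : ∀ f g : ↥S, dist (T f) (T g) ≤ k * dist f g := by
    intro f g
    have hd0 : (0:ℝ) ≤ dist f g := dist_nonneg
    rw [Subtype.dist_eq, ContinuousMap.dist_le (mul_nonneg hk0 hd0)]
    intro t
    rw [dist_pi_le_iff (mul_nonneg hk0 hd0)]
    intro i
    show dist (picardMap β Γβ Λ hΛle D b f.1 ↑t i) (picardMap β Γβ Λ hΛle D b g.1 ↑t i)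
      ≤ k * dist f g
    rw [Real.dist_eq]
    have he : picardMap β Γβ Λ hΛle D b f.1 ↑t i - picardMap β Γβ Λ hΛle D b g.1 ↑t i
        = Γβ * (↑t:ℝ)^β * ((∫ y in (0:ℝ)..1, β * y ^ (β - 1) *
            (D.mulVec (quadMap b (g.1 (Set.projIcc 0 Λ hΛle (↑t * (1 - y))))) i))
          - (∫ y in (0:ℝ)..1, β * y ^ (β - 1) *
            (D.mulVec (quadMap b (f.1 (Set.projIcc 0 Λ hΛle (↑t * (1 - y))))) i))) := by
      unfold picardMap; ring
    rw [he, abs_mul, abs_of_nonneg (hu t).1]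
    have hJd : |(∫ y in (0:ℝ)..1, β * y ^ (β - 1) *
            (D.mulVec (quadMap b (g.1 (Set.projIcc 0 Λ hΛle (↑t * (1 - y))))) i))
          - (∫ y in (0:ℝ)..1, β * y ^ (β - 1) *
            (D.mulVec (quadMap b (f.1 (Set.projIcc 0 Λ hΛle (↑t * (1 - y))))) i))|
        ≤ L * dist f g := by
      rw [← intervalIntegral.integral_sub (hint g.1 ↑t i) (hint f.1 ↑t i)]
      refine (intervalIntegral.abs_integral_le_integral_abs zero_le_one).trans ?_
      have hmono := intervalIntegral.integral_mono_on zero_le_one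
        (((hint g.1 ↑t i).sub (hint f.1 ↑t i)).abs) (hw_int.mul_const (L * dist f g))
        (fun y hy => ?_)
      · refine hmono.trans ?_
        rw [intervalIntegral.integral_mul_const, hw_val, one_mul]
      · have hw : 0 ≤ β * y ^ (β - 1) := mul_nonneg hβ0.le (Real.rpow_nonneg hy.1 _)
        show |β * y ^ (β - 1) *
            (D.mulVec (quadMap b (g.1 (Set.projIcc 0 Λ hΛle (↑t * (1 - y))))) i)
          - β * y ^ (β - 1) *
            (D.mulVec (quadMap b (f.1 (Set.projIcc 0 Λ hΛle (↑t * (1 - y))))) i)|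
          ≤ β * y ^ (β - 1) * (L * dist f g)
        rw [← mul_sub, abs_mul, abs_of_nonneg hw]
        refine mul_le_mul_of_nonneg_left ?_ hw
        set p := Set.projIcc 0 Λ hΛle (↑t * (1 - y)) with hpdef
        have hxg : ∀ j, |g.1 p j| ≤ cm := fun j => by
          rw [abs_of_nonneg (g.2 p j).1]; exact (g.2 p j).2.trans (hcmj j)
        have hxf : ∀ j, |f.1 p j| ≤ cm := fun j => by
          rw [abs_of_nonneg (f.2 p j).1]; exact (f.2 p j).2.trans (hcmj j)
        have hdj : ∀ j, |g.1 p j - f.1 p j| ≤ dist f g := by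
          intro j
          rw [← Real.dist_eq, dist_comm]
          refine (dist_le_pi_dist (f.1 p) (g.1 p) j).trans ?_
          refine (ContinuousMap.dist_apply_le_dist p).trans ?_
          exact le_of_eq (Subtype.dist_eq f g).symm
        refine (nl_lip hD0 hb hxg hxf hdj i).trans ?_
        have he2 : (∑ j, D i j * (∑ k, ∑ m', b j k m')) * (cm * dist f g)
            = Li i * dist f g := by rw [hLidef]; ring
        rw [he2]
        exact mul_le_mul_of_nonneg_right (hLiL i) hd0
    calc Γβ * (↑t:ℝ)^β * |(∫ y in (0:ℝ)..1, β * y ^ (β - 1) *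
            (D.mulVec (quadMap b (g.1 (Set.projIcc 0 Λ hΛle (↑t * (1 - y))))) i))
          - (∫ y in (0:ℝ)..1, β * y ^ (β - 1) *
            (D.mulVec (quadMap b (f.1 (Set.projIcc 0 Λ hΛle (↑t * (1 - y))))) i))|
        ≤ ε * (L * dist f g) := mul_le_mul (hu t).2 hJd (abs_nonneg _) hε.le
      _ = k * dist f g := by rw [hkdef]; ring
  -- Banach fixed point
  haveI : CompleteSpace ↥S := hSc.completeSpace_coe
  haveI : Nonempty ↥S :=
    ⟨⟨ContinuousMap.const _ c, fun t i => Set.mem_Icc.mpr ⟨hc0 i, le_rfl⟩⟩⟩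
  have hcontr : ContractingWith ⟨k, hk0⟩ T := by
    constructor
    · exact_mod_cast hk1
    · refine LipschitzWith.of_dist_le_mul fun f g => ?_
      exact hTlip f g
  obtain ⟨Θhat, hfixΘ⟩ : ∃ x : ↥S, Function.IsFixedPt T x :=
    ⟨_, hcontr.fixedPoint_isFixedPt⟩
  refine ⟨Λ, hΛ, fun l => Θhat.1 (Set.projIcc 0 Λ hΛle l), ?_, ?_, ?_, ?_⟩
  · intro i
    exact ((continuous_apply i).comp
      (Θhat.1.continuous.comp continuous_projIcc)).continuousOn
  · intro l hl i
    have hm := Θhat.2 (Set.projIcc 0 Λ hΛle l) i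
    exact ⟨hm.1, hm.2⟩
  · intro l hl i
    have h1 : Set.projIcc 0 Λ hΛle l = ⟨l, hl⟩ := Set.projIcc_of_mem _ hl
    have h2 : (T Θhat).1 ⟨l, hl⟩ i = Θhat.1 ⟨l, hl⟩ i := by rw [hfixΘ]
    show Θhat.1 (Set.projIcc 0 Λ hΛle l) i = _
    rw [h1, ← h2]
    rfl
  · intro Θ' hcont' hpos' heq' l hl i
    have hub : ∀ l' ∈ Set.Icc (0:ℝ) Λ, ∀ i', Θ' l' i' ≤ c i' := by
      intro l' hl' i'
      rw [heq' l' hl' i']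
      have hJ0 : 0 ≤ ∫ y in (0:ℝ)..1, β * y ^ (β - 1) *
          (D.mulVec (quadMap b (Θ' (l' * (1 - y)))) i') := by
        refine intervalIntegral.integral_nonneg zero_le_one fun y hy => ?_
        have harg : l' * (1 - y) ∈ Set.Icc (0:ℝ) Λ :=
          ⟨mul_nonneg hl'.1 (sub_nonneg.mpr hy.2),
            (mul_le_of_le_one_right hl'.1 (sub_le_self 1 hy.1)).trans hl'.2⟩
        exact mul_nonneg (mul_nonneg hβ0.le (Real.rpow_nonneg hy.1 _))
          (nl_nonneg hD0 hb (fun j => hpos' _ harg j) i')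
      have hu0 : 0 ≤ Γβ * l'^β := mul_nonneg hΓ.le (Real.rpow_nonneg hl'.1 _)
      nlinarith [mul_nonneg hu0 hJ0]
    have hcf' : Continuous fun t : Set.Icc (0:ℝ) Λ => fun i' => Θ' ↑t i' :=
      continuous_pi fun i' => (hcont' i').restrict
    set f' : C(Set.Icc (0:ℝ) Λ, Fin 2 → ℝ) := ⟨fun t => fun i' => Θ' ↑t i', hcf'⟩ with hf'def
    have hf'S : f' ∈ S := fun t i' => Set.mem_Icc.mpr ⟨hpos' ↑t t.2 i', hub ↑t t.2 i'⟩
    have hfix' : Function.IsFixedPt T ⟨f', hf'S⟩ := by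
      refine Subtype.ext (ContinuousMap.ext fun t => funext fun i' => ?_)
      have ht0 : (0:ℝ) ≤ ↑t := t.2.1
      have htΛ : (↑t:ℝ) ≤ Λ := t.2.2
      have hIeq : (∫ y in (0:ℝ)..1, β * y ^ (β - 1) *
            (D.mulVec (quadMap b (f' (Set.projIcc 0 Λ hΛle (↑t * (1 - y))))) i'))
          = ∫ y in (0:ℝ)..1, β * y ^ (β - 1) *
            (D.mulVec (quadMap b (Θ' (↑t * (1 - y)))) i') := by
        refine intervalIntegral.integral_congr fun y hy => ?_
        rw [Set.uIcc_of_le (zero_le_one' ℝ)] at hy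
        have harg : (↑t : ℝ) * (1 - y) ∈ Set.Icc (0:ℝ) Λ :=
          ⟨mul_nonneg ht0 (sub_nonneg.mpr hy.2),
            (mul_le_of_le_one_right ht0 (sub_le_self 1 hy.1)).trans htΛ⟩
        rw [Set.projIcc_of_mem hΛle harg]
        rfl
      show picardMap β Γβ Λ hΛle D b f' ↑t i' = Θ' ↑t i'
      unfold picardMap
      rw [hIeq]
      exact (heq' ↑t t.2 i').symm
    have huniq : (⟨f', hf'S⟩ : ↥S) = Θhat := hcontr.fixedPoint_unique' hfix' hfixΘ
    have h1 : Set.projIcc 0 Λ hΛle l = ⟨l, hl⟩ := Set.projIcc_of_mem _ hl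
    calc Θ' l i = f' ⟨l, hl⟩ i := rfl
      _ = Θhat.1 ⟨l, hl⟩ i := by rw [← huniq]
      _ = Θhat.1 (Set.projIcc 0 Λ hΛle l) i := by rw [h1]
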